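/- Let u₀(x) = log ∑_{λ ∈ S} e^{⟨x, λ⟩} for a finite set S ⊂ ℝᵐ, and let l be an affine function on ℝᵐ with l ≥ 0 on the convex hull of S. Then there exists a constant C > 0 depending only on S and l such that for all x, y ∈ ℝᵐ with |x - y| ≤ R, one has l(∇u₀(x)) ≤ e^{C·R} · l(∇u₀(y)). -/

import Mathlib

open scoped RealInnerProductSpace
open Real Finset

lemma grad_lse {m : ℕ} (S : Finset (EuclideanSpace ℝ (Fin m))) (hS : S.Nonempty)
    (x : EuclideanSpace ℝ (Fin m)) :
    gradient (fun z => Real.log (∑ lam ∈ S, Real.exp ⟪z, lam⟫)) x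
      = (∑ lam ∈ S, Real.exp ⟪x, lam⟫)⁻¹ • ∑ lam ∈ S, Real.exp ⟪x, lam⟫ • lam := by
  set g : EuclideanSpace ℝ (Fin m) → ℝ := fun z => ∑ lam ∈ S, Real.exp ⟪z, lam⟫ with hg
  have hgpos : 0 < g x := Finset.sum_pos (fun lam _ => Real.exp_pos _) hS
  have h1 : ∀ lam : EuclideanSpace ℝ (Fin m),
      HasFDerivAt (fun z : EuclideanSpace ℝ (Fin m) => Real.exp ⟪z, lam⟫)
        (Real.exp ⟪x, lam⟫ • (innerSL ℝ lam : EuclideanSpace ℝ (Fin m) →L[ℝ] ℝ)) x := by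
    intro lam
    have h := (Real.hasDerivAt_exp ((innerSL ℝ lam) x)).comp_hasFDerivAt x
      ((innerSL ℝ lam).hasFDerivAt (x := x))
    have e1 : (fun z : EuclideanSpace ℝ (Fin m) => Real.exp ⟪z, lam⟫)
        = Real.exp ∘ (innerSL ℝ lam) := by
      funext z; simp [real_inner_comm]
    rw [e1]
    rw [show (innerSL ℝ lam) x = ⟪x, lam⟫ by rw [innerSL_apply_apply, real_inner_comm]] at h
    exact h
  have hgd : HasFDerivAt g (∑ lam ∈ S, Real.exp ⟪x, lam⟫ • (innerSL ℝ lam : EuclideanSpace ℝ (Fin m) →L[ℝ] ℝ)) x :=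
    HasFDerivAt.fun_sum (fun lam _ => h1 lam)
  have hlog : HasFDerivAt (fun z => Real.log (g z))
      ((g x)⁻¹ • ∑ lam ∈ S, Real.exp ⟪x, lam⟫ • (innerSL ℝ lam : EuclideanSpace ℝ (Fin m) →L[ℝ] ℝ)) x :=
    (Real.hasDerivAt_log (ne_of_gt hgpos)).comp_hasFDerivAt x hgd
  have hdual : (InnerProductSpace.toDual ℝ (EuclideanSpace ℝ (Fin m)))
      ((g x)⁻¹ • ∑ lam ∈ S, Real.exp ⟪x, lam⟫ • lam)
      = (g x)⁻¹ • ∑ lam ∈ S, Real.exp ⟪x, lam⟫ • (innerSL ℝ lam : EuclideanSpace ℝ (Fin m) →L[ℝ] ℝ) := by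
    ext y
    simp [inner_smul_left, sum_inner, InnerProductSpace.toDual_apply_apply]
  have : HasGradientAt (fun z => Real.log (g z))
      ((g x)⁻¹ • ∑ lam ∈ S, Real.exp ⟪x, lam⟫ • lam) x := by
    rw [hasGradientAt_iff_hasFDerivAt, hdual]; exact hlog
  exact this.gradient

lemma l_grad_eq {m : ℕ} (S : Finset (EuclideanSpace ℝ (Fin m))) (hS : S.Nonempty)
    (l : EuclideanSpace ℝ (Fin m) →ᵃ[ℝ] ℝ) (x : EuclideanSpace ℝ (Fin m)) :
    l (gradient (fun z => Real.log (∑ lam ∈ S, Real.exp ⟪z, lam⟫)) x)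
      = (∑ lam ∈ S, Real.exp ⟪x, lam⟫)⁻¹ * ∑ lam ∈ S, Real.exp ⟪x, lam⟫ * l lam := by
  rw [grad_lse S hS x]
  set G := ∑ lam ∈ S, Real.exp ⟪x, lam⟫ with hG
  have hGpos : 0 < G := Finset.sum_pos (fun lam _ => Real.exp_pos _) hS
  have key : ∀ p : EuclideanSpace ℝ (Fin m), l p = l.linear p + l 0 := by
    intro p
    have := l.map_vadd 0 p
    simpa using this
  rw [key]
  have : l.linear (G⁻¹ • ∑ lam ∈ S, Real.exp ⟪x, lam⟫ • lam)
      = G⁻¹ * ∑ lam ∈ S, Real.exp ⟪x, lam⟫ * l.linear lam := by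
    rw [map_smul, map_sum]
    simp [smul_eq_mul]
  rw [this]
  have expand : ∑ lam ∈ S, Real.exp ⟪x, lam⟫ * l lam
      = (∑ lam ∈ S, Real.exp ⟪x, lam⟫ * l.linear lam) + G * l 0 := by
    rw [hG, Finset.sum_mul, ← Finset.sum_add_distrib]
    exact Finset.sum_congr rfl (fun lam _ => by rw [key lam]; ring)
  rw [expand]
  field_simp

/-- Harnack-type estimate: for `u₀(x) = log ∑_{λ∈S} e^{⟨x,λ⟩}` and an affine
function `l ≥ 0` on the convex hull of `S`, there is `C > 0` with
`l(∇u₀(x)) ≤ e^{C·R} · l(∇u₀(y))` whenever `|x - y| ≤ R`. -/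
theorem stmt_9 {m : ℕ} (S : Finset (EuclideanSpace ℝ (Fin m))) (hS : S.Nonempty)
    (l : EuclideanSpace ℝ (Fin m) →ᵃ[ℝ] ℝ)
    (hl : ∀ p ∈ convexHull ℝ (S : Set (EuclideanSpace ℝ (Fin m))), 0 ≤ l p) :
    ∃ C > 0, ∀ x y : EuclideanSpace ℝ (Fin m), ∀ R : ℝ, dist x y ≤ R →
      l (gradient (fun z => Real.log (∑ lam ∈ S, Real.exp ⟪z, lam⟫)) x) ≤
        Real.exp (C * R) *
          l (gradient (fun z => Real.log (∑ lam ∈ S, Real.exp ⟪z, lam⟫)) y) := by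
  set M : ℝ := S.sup' hS (fun lam => ‖lam‖) with hM
  have hM0 : 0 ≤ M := le_trans (norm_nonneg _) (Finset.le_sup' _ hS.choose_spec)
  refine ⟨2 * (M + 1), by linarith, ?_⟩
  intro x y R hR
  have hR0 : 0 ≤ R := le_trans dist_nonneg hR
  have hlS : ∀ lam ∈ S, 0 ≤ l lam := fun lam hlam =>
    hl lam (subset_convexHull ℝ _ hlam)
  set A := (M + 1) * R with hA
  have hA0 : 0 ≤ A := mul_nonneg (by linarith) hR0
  -- pointwise exponential comparison
  have hcomp : ∀ (a b : EuclideanSpace ℝ (Fin m)), dist a b ≤ R → ∀ lam ∈ S,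
      Real.exp ⟪a, lam⟫ ≤ Real.exp A * Real.exp ⟪b, lam⟫ := by
    intro a b hab lam hlam
    rw [← Real.exp_add]
    apply Real.exp_le_exp.mpr
    have h1 : ⟪a, lam⟫ - ⟪b, lam⟫ = ⟪a - b, lam⟫ := by
      rw [inner_sub_left]
    have h2 : ⟪a - b, lam⟫ ≤ ‖a - b‖ * ‖lam‖ := real_inner_le_norm _ _
    have h3 : ‖a - b‖ ≤ R := by rwa [← dist_eq_norm]
    have h4 : ‖lam‖ ≤ M := Finset.le_sup' _ hlam
    have h5 : ‖a - b‖ * ‖lam‖ ≤ R * (M + 1) :=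
      mul_le_mul (le_trans h3 (le_refl R)) (by linarith) (norm_nonneg _) hR0
    nlinarith [h2, h1]
  have key := fun z => l_grad_eq S hS l z
  rw [key x, key y]
  set Gx := ∑ lam ∈ S, Real.exp ⟪x, lam⟫ with hGx
  set Gy := ∑ lam ∈ S, Real.exp ⟪y, lam⟫ with hGy
  have hGxpos : 0 < Gx := Finset.sum_pos (fun lam _ => Real.exp_pos _) hS
  have hGypos : 0 < Gy := Finset.sum_pos (fun lam _ => Real.exp_pos _) hS
  -- numerator bound
  have hnum : ∑ lam ∈ S, Real.exp ⟪x, lam⟫ * l lam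
      ≤ Real.exp A * ∑ lam ∈ S, Real.exp ⟪y, lam⟫ * l lam := by
    rw [Finset.mul_sum]
    apply Finset.sum_le_sum
    intro lam hlam
    rw [← mul_assoc]
    exact mul_le_mul_of_nonneg_right (hcomp x y hR lam hlam) (hlS lam hlam)
  -- denominator bound : Gy ≤ exp A * Gx
  have hden : Gy ≤ Real.exp A * Gx := by
    rw [hGy, hGx, Finset.mul_sum]
    exact Finset.sum_le_sum (fun lam hlam => hcomp y x (by rwa [dist_comm]) lam hlam)
  have hinv : Gx⁻¹ ≤ Real.exp A * Gy⁻¹ := by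
    rw [← div_eq_mul_inv, le_div_iff₀ hGypos, inv_mul_eq_div, div_le_iff₀ hGxpos]
    linarith [hden]
  have hnum0 : 0 ≤ ∑ lam ∈ S, Real.exp ⟪y, lam⟫ * l lam :=
    Finset.sum_nonneg fun lam hlam => mul_nonneg (Real.exp_pos _).le (hlS lam hlam)
  have hnumx0 : 0 ≤ ∑ lam ∈ S, Real.exp ⟪x, lam⟫ * l lam :=
    Finset.sum_nonneg fun lam hlam => mul_nonneg (Real.exp_pos _).le (hlS lam hlam)
  calc Gx⁻¹ * ∑ lam ∈ S, Real.exp ⟪x, lam⟫ * l lam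
      ≤ (Real.exp A * Gy⁻¹) * (Real.exp A * ∑ lam ∈ S, Real.exp ⟪y, lam⟫ * l lam) := by
        apply mul_le_mul hinv hnum hnumx0
        positivity
    _ = (Real.exp A * Real.exp A) * (Gy⁻¹ * ∑ lam ∈ S, Real.exp ⟪y, lam⟫ * l lam) := by ring
    _ ≤ Real.exp (2 * (M + 1) * R) * (Gy⁻¹ * ∑ lam ∈ S, Real.exp ⟪y, lam⟫ * l lam) := by
        apply mul_le_mul_of_nonneg_right _ (mul_nonneg (inv_nonneg.mpr hGypos.le) hnum0)
        rw [← Real.exp_add]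
        apply Real.exp_le_exp.mpr
        rw [hA]; ring_nf; rfl
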